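/- Let $S = \oplus_{n \geq 0} I_n$ be a Noetherian graded ring with $I_0 = R$ Noetherian and $I_n$ a decreasing multiplicative filtration of ideals. If the ideal of $S$ generated by all elements of positive degree is generated by elements of degree at most $k$, then for all $m \geq k \cdot k!$, $I_m = I_{m-k!} I_{k!}$. -/

import Mathlib

section Aux
variable {R : Type*} [CommRing R] (I : ℕ → Ideal R)

lemma aux_sum_le {ι : Type*} {s : Finset ι} {f : ι → Ideal R} {T : Ideal R}
    (h : ∀ i ∈ s, f i ≤ T) : ∑ i ∈ s, f i ≤ T := by
  classical
  induction s using Finset.cons_induction with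
  | empty => simp
  | cons a s ha ih =>
    rw [Finset.sum_cons, Submodule.add_eq_sup]
    exact sup_le (h a (Finset.mem_cons_self a s))
      (ih fun i hi => h i (Finset.mem_cons_of_mem hi))

lemma aux_prod_le (hmul : ∀ m n, I m * I n ≤ I (m + n)) (h0 : I 0 = ⊤) (M : Multiset ℕ) : (M.map I).prod ≤ I M.sum := by
  induction M using Multiset.induction with
  | empty => simp [h0, Ideal.one_eq_top]
  | cons a M ih =>
    simp only [Multiset.map_cons, Multiset.prod_cons, Multiset.sum_cons]
    exact le_trans (Ideal.mul_mono_right ih) (hmul _ _)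

lemma aux_pow_le (hmul : ∀ m n, I m * I n ≤ I (m + n)) (h0 : I 0 = ⊤) (i r : ℕ) : (I i) ^ r ≤ I (r * i) := by
  induction r with
  | zero => simp [h0, Ideal.one_eq_top]
  | succ r ih =>
    rw [pow_succ, Nat.succ_mul]
    exact le_trans (Ideal.mul_mono_left ih) (hmul _ _)

lemma aux_pigeon (k : ℕ) (hk : 1 ≤ k) (M : Multiset ℕ)
    (hM : ∀ i ∈ M, 1 ≤ i ∧ i ≤ k) (hsum : k * Nat.factorial k ≤ M.sum) :
    ∃ i, 1 ≤ i ∧ i ≤ k ∧ Nat.factorial k / i ≤ M.count i := by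
  by_contra h
  push_neg at h
  have hb : M.sum ≤ k * (Nat.factorial k - 1) := by
    have hMsum : M.sum = ∑ m ∈ M.toFinset, M.count m • m := by
      conv_lhs => rw [← Multiset.map_id M]
      exact Finset.sum_multiset_map_count M id
    rw [hMsum]
    calc ∑ m ∈ M.toFinset, M.count m • m
        ≤ ∑ _m ∈ M.toFinset, (Nat.factorial k - 1) := by
          apply Finset.sum_le_sum
          intro m hm
          obtain ⟨h1, h2⟩ := hM m (Multiset.mem_toFinset.mp hm)
          have hcount : M.count m < Nat.factorial k / m := h m h1 h2
          have hdvd : m ∣ Nat.factorial k := Nat.dvd_factorial h1 h2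
          have hml : M.count m * m ≤ (Nat.factorial k / m - 1) * m :=
            Nat.mul_le_mul_right m (Nat.le_sub_one_of_lt hcount)
          rw [Nat.sub_mul, one_mul, Nat.div_mul_cancel hdvd] at hml
          calc M.count m • m = M.count m * m := by rw [smul_eq_mul]
            _ ≤ Nat.factorial k - m := hml
            _ ≤ Nat.factorial k - 1 := Nat.sub_le_sub_left h1 _
      _ = M.toFinset.card * (Nat.factorial k - 1) := by
          rw [Finset.sum_const, smul_eq_mul]
      _ ≤ k * (Nat.factorial k - 1) := by
          apply Nat.mul_le_mul_right
          calc M.toFinset.card ≤ (Finset.Icc 1 k).card := by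
                apply Finset.card_le_card
                intro m hm
                obtain ⟨h1, h2⟩ := hM m (Multiset.mem_toFinset.mp hm)
                exact Finset.mem_Icc.mpr ⟨h1, h2⟩
            _ = k := by rw [Nat.card_Icc]; omega
  have hfac := Nat.factorial_pos k
  have : k * (Nat.factorial k - 1) < k * Nat.factorial k :=
    Nat.mul_lt_mul_of_pos_left (Nat.sub_lt hfac one_pos) (by omega)
  omega

lemma aux_claim2 (hmul : ∀ m n, I m * I n ≤ I (m + n)) (h0 : I 0 = ⊤) (k : ℕ) (hk : 1 ≤ k) (M : Multiset ℕ)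
    (hM : ∀ i ∈ M, 1 ≤ i ∧ i ≤ k) (hsum : k * Nat.factorial k ≤ M.sum) :
    (M.map I).prod ≤ I (Nat.factorial k) * I (M.sum - Nat.factorial k) := by
  obtain ⟨i, h1, h2, hc⟩ := aux_pigeon k hk M hM hsum
  set r := Nat.factorial k / i with hr
  have hdvd : i ∣ Nat.factorial k := Nat.dvd_factorial h1 h2
  have hri : r * i = Nat.factorial k := Nat.div_mul_cancel hdvd
  have hle : Multiset.replicate r i ≤ M := Multiset.le_count_iff_replicate_le.mp hc
  set M' := M - Multiset.replicate r i with hM'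
  have hMeq : Multiset.replicate r i + M' = M := by
    rw [hM', add_comm]
    exact tsub_add_cancel_of_le hle
  have hsum' : Nat.factorial k + M'.sum = M.sum := by
    conv_rhs => rw [← hMeq]
    simp [Multiset.sum_replicate, smul_eq_mul, hri]
  have hfacle : Nat.factorial k ≤ M.sum := by omega
  calc (M.map I).prod = ((Multiset.replicate r i).map I).prod * (M'.map I).prod := by
        conv_lhs => rw [← hMeq]
        rw [Multiset.map_add, Multiset.prod_add]
    _ = (I i) ^ r * (M'.map I).prod := by
        rw [Multiset.map_replicate, Multiset.prod_replicate]
    _ ≤ I (Nat.factorial k) * I (M.sum - Nat.factorial k) := by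
        apply Ideal.mul_mono
        · exact le_trans (aux_pow_le I hmul h0 i r) (le_of_eq (congrArg I hri))
        · refine le_trans (aux_prod_le I hmul h0 M') (le_of_eq ?_)
          congr 1
          omega

lemma aux_claim1 (k : ℕ) (hk : 1 ≤ k)
    (hgen : ∀ m, k < m → I m = ∑ i ∈ Finset.Icc 1 k, I i * I (m - i)) :
    ∀ n, 1 ≤ n → I n ≤ ⨆ (M : Multiset ℕ)
      (_ : (∀ i ∈ M, 1 ≤ i ∧ i ≤ k) ∧ M.sum = n), (M.map I).prod := by
  intro n
  induction n using Nat.strong_induction_on with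
  | _ n ih =>
    intro hn
    by_cases hcase : n ≤ k
    · refine le_iSup_of_le ((n : ℕ) ::ₘ (0 : Multiset ℕ)) (le_iSup_of_le ?_ (le_of_eq ?_))
      · exact ⟨by simpa using And.intro hn hcase, by simp⟩
      · simp
    · push_neg at hcase
      rw [hgen n hcase]
      apply aux_sum_le
      intro i hi
      rw [Finset.mem_Icc] at hi
      have hni : 1 ≤ n - i ∧ n - i < n := by omega
      calc I i * I (n - i)
          ≤ I i * ⨆ (M : Multiset ℕ)
            (_ : (∀ j ∈ M, 1 ≤ j ∧ j ≤ k) ∧ M.sum = n - i), (M.map I).prod :=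
            Ideal.mul_mono_right (ih (n - i) hni.2 hni.1)
        _ = ⨆ (M : Multiset ℕ)
            (_ : (∀ j ∈ M, 1 ≤ j ∧ j ≤ k) ∧ M.sum = n - i), I i * (M.map I).prod := by
            simp_rw [Submodule.mul_iSup]
        _ ≤ ⨆ (M : Multiset ℕ)
            (_ : (∀ j ∈ M, 1 ≤ j ∧ j ≤ k) ∧ M.sum = n), (M.map I).prod := by
            refine iSup_le fun M => iSup_le fun hM => ?_
            refine le_iSup_of_le (i ::ₘ M) (le_iSup_of_le ?_ (le_of_eq ?_))
            · constructor
              · intro j hj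
                rcases Multiset.mem_cons.mp hj with rfl | hj
                · exact ⟨hi.1, hi.2⟩
                · exact hM.1 j hj
              · rw [Multiset.sum_cons, hM.2]; omega
            · simp

end Aux

theorem filtration_degree_bound' {R : Type*} [CommRing R]
    (I : ℕ → Ideal R)
    (hmul : ∀ m n, I m * I n ≤ I (m + n)) (h0 : I 0 = ⊤)
    (k : ℕ) (hk : 1 ≤ k)
    (hgen : ∀ m, k < m → I m = ∑ i ∈ Finset.Icc 1 k, I i * I (m - i)) :
    ∀ m, k * Nat.factorial k ≤ m → I m = I (m - Nat.factorial k) * I (Nat.factorial k) := by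
  intro m hm
  have hfac := Nat.factorial_pos k
  have hfle : Nat.factorial k ≤ m := le_trans (Nat.le_mul_of_pos_left _ (by omega)) hm
  apply le_antisymm
  · have h1 : I m ≤ ⨆ (M : Multiset ℕ)
        (_ : (∀ i ∈ M, 1 ≤ i ∧ i ≤ k) ∧ M.sum = m), (M.map I).prod :=
      aux_claim1 I k hk hgen m (by omega)
    refine le_trans h1 (iSup_le fun M => iSup_le fun hM => ?_)
    have h2 := aux_claim2 I hmul h0 k hk M hM.1 (by rw [hM.2]; exact hm)
    rw [hM.2] at h2
    exact le_trans h2 (le_of_eq (mul_comm _ _))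
  · exact le_trans (hmul _ _) (le_of_eq (by rw [Nat.sub_add_cancel hfle]))

/-- The graded ring `⊕ₙ Iₙ` associated to a multiplicative decreasing filtration of
ideals of `R` with `I 0 = R`, realized as the subalgebra of `R[X]` consisting of the
polynomials whose `n`-th coefficient lies in `I n`. -/
def filtRees (R : Type*) [CommRing R] (I : ℕ → Ideal R)
    (hmul : ∀ m n, I m * I n ≤ I (m + n)) (h0 : I 0 = ⊤) :
    Subalgebra R (Polynomial R) where
  carrier := {p | ∀ n, p.coeff n ∈ I n}
  add_mem' := fun {p q} hp hq n => by
    simpa [Polynomial.coeff_add] using (I n).add_mem (hp n) (hq n)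
  mul_mem' := fun {p q} hp hq n => by
    rw [Polynomial.coeff_mul]
    refine Submodule.sum_mem _ fun c hc => ?_
    rw [Finset.HasAntidiagonal.mem_antidiagonal] at hc
    have h := Ideal.mul_mem_mul (hp c.1) (hq c.2)
    exact hc ▸ hmul c.1 c.2 h
  algebraMap_mem' := fun r n => by
    rcases Nat.eq_zero_or_pos n with h | h
    · subst h
      simp [h0]
    · simp [Polynomial.coeff_C, Nat.pos_iff_ne_zero.mp h]

/-- Let `S = ⊕ₙ Iₙ` be a Noetherian graded ring with `I₀ = R` Noetherian
and `Iₙ` a decreasing multiplicative filtration of ideals.  If the ideal of `S` generated by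
the elements of positive degree is generated by elements of degree at most `k` (expressed
degreewise: `I m = ∑_{1 ≤ i ≤ k} I i * I (m - i)` for every `m > k`), then for all
`m ≥ k ⬝ k!` we have `I m = I (m - k!) * I k!`. -/
theorem filtration_degree_bound {R : Type*} [CommRing R] [IsNoetherianRing R]
    (I : ℕ → Ideal R) (hdec : ∀ n, I (n + 1) ≤ I n)
    (hmul : ∀ m n, I m * I n ≤ I (m + n)) (h0 : I 0 = ⊤)
    (hS : IsNoetherianRing (filtRees R I hmul h0)) (k : ℕ) (hk : 1 ≤ k)
    (hgen : ∀ m, k < m → I m = ∑ i ∈ Finset.Icc 1 k, I i * I (m - i)) :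
    ∀ m, k * Nat.factorial k ≤ m → I m = I (m - Nat.factorial k) * I (Nat.factorial k) :=
  filtration_degree_bound' I hmul h0 k hk hgen
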